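/- Let q be prime, L coprime to q, m the multiplicative order of q modulo L, beta a primitive L-th root of unity in F_{q^m}, J the set of integers 1 <= j <= L-1 coprime to L, and n <= m. For exponents l_0, ..., l_{n-1} given by l_i = i + c mod L for a fixed constant c, the following holds: for every j in J and every nonzero vector (a_0, ..., a_{n-1}) in F_q^n, sum_{i=0}^{n-1} a_i beta^{j l_i} is nonzero. Equivalently, beta^{j l_0}, ..., beta^{j l_{n-1}} are F_q-linearly independent for every j in J. -/

import Mathlib

/-- With `q` prime, `L` coprime to `q`, `m` the multiplicative order of `q` mod `L`,
`β` a primitive `L`-th root of unity in `F_{q^m}`, `n ≤ m`, and exponents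
`l_i = (i + c) mod L`:  for every `j` coprime to `L` with `1 ≤ j ≤ L-1` and every
nonzero vector `(a_0, …, a_{n-1})` over `F_q` (elements of `F_q` being those `a`
with `a ^ q = a`), the sum `∑_i a_i β^{j l_i}` is nonzero; equivalently,
`β^{j l_0}, …, β^{j l_{n-1}}` are `F_q`-linearly independent. -/
theorem consecutive_exponents_nonvanishing
    (q L m n c : ℕ) (hq : q.Prime) (hL : 0 < L) (hco : Nat.Coprime q L)
    (hm : orderOf (q : ZMod L) = m)
    (K : Type*) [Field K] [Fintype K] (hcard : Fintype.card K = q ^ m)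
    (β : K) (hβ : IsPrimitiveRoot β L)
    (hn : n ≤ m) (hc : c ≤ L - 1) :
    ∀ j : ℕ, 1 ≤ j → j ≤ L - 1 → Nat.Coprime j L →
      ∀ a : Fin n → K, (∀ i, a i ^ q = a i) → (∃ i, a i ≠ 0) →
        ∑ i : Fin n, a i * β ^ (j * (((i : ℕ) + c) % L)) ≠ 0 := by
  classical
  intro j hj1 hjL hjco a hfix ⟨i0, hi0⟩ hzero
  -- n ≥ 1, m ≥ 1
  have hn1 : 1 ≤ n := Nat.pos_of_ne_zero (by rintro rfl; exact (Fin.elim0 i0))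
  have hm1 : 1 ≤ m := le_trans hn1 hn
  -- characteristic of K is q
  obtain ⟨p, hp⟩ := CharP.exists K
  obtain ⟨d, hpprime, hcard'⟩ := FiniteField.card K p
  have hqp : q = p := by
    have hdvd : q ∣ p ^ (d : ℕ) := by
      rw [← hcard', hcard]
      exact dvd_pow_self q (by omega)
    exact ((Nat.prime_dvd_prime_iff_eq hq hpprime).mp (hq.dvd_of_dvd_pow hdvd))
  subst hqp
  haveI := Fact.mk hq
  -- γ = β^j is a primitive L-th root of unity
  set γ : K := β ^ j with hγdef
  have hγ : IsPrimitiveRoot γ L := hβ.pow_of_coprime j hjco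
  have hγord : orderOf γ = L := (hγ.eq_orderOf).symm
  have hβne : β ≠ 0 := by
    intro h
    have := hβ.pow_eq_one
    rw [h, zero_pow hL.ne'] at this
    exact zero_ne_one this
  -- rewrite the sum
  have hterm : ∀ i : Fin n, a i * β ^ (j * (((i : ℕ) + c) % L))
      = (a i * γ ^ (i : ℕ)) * β ^ (j * c) := by
    intro i
    have h1 : β ^ (j * (((i : ℕ) + c) % L)) = γ ^ (((i : ℕ) + c) % L) := by
      rw [hγdef, ← pow_mul]
    have h2 : γ ^ (((i : ℕ) + c) % L) = γ ^ ((i : ℕ) + c) := by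
      rw [← hγord, pow_mod_orderOf]
    have h3 : γ ^ ((i : ℕ) + c) = γ ^ (i : ℕ) * β ^ (j * c) := by
      rw [pow_add]; congr 1; exact (pow_mul β j c).symm
    rw [h1, h2, h3]; ring
  rw [Finset.sum_congr rfl (fun i _ => hterm i), ← Finset.sum_mul] at hzero
  have hsum0 : ∑ i : Fin n, a i * γ ^ (i : ℕ) = 0 := by
    rcases mul_eq_zero.mp hzero with h | h
    · exact h
    · exact absurd h (pow_ne_zero _ hβne)
  -- the polynomial
  set f : Polynomial K := ∑ i : Fin n, Polynomial.C (a i) * Polynomial.X ^ (i : ℕ)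
    with hfdef
  have heval : ∀ x : K, f.eval x = ∑ i : Fin n, a i * x ^ (i : ℕ) := by
    intro x
    simp [hfdef, Polynomial.eval_finset_sum]
  have hfne : f ≠ 0 := by
    intro h
    have : f.coeff (i0 : ℕ) = a i0 := by
      rw [hfdef, Polynomial.finset_sum_coeff]
      rw [Finset.sum_eq_single i0]
      · simp
      · intro b _ hb
        simp only [Polynomial.coeff_C_mul, Polynomial.coeff_X_pow]
        rw [if_neg (fun hh => hb (Fin.ext (by omega))), mul_zero]
      · simp
    rw [h] at this
    exact hi0 (by simpa using this.symm)
  have hdeg : f.degree < (n : WithBot ℕ) := by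
    refine lt_of_le_of_lt (Polynomial.degree_sum_le _ _) ?_
    rw [Finset.sup_lt_iff (by exact_mod_cast WithBot.bot_lt_coe n)]
    intro i _
    exact lt_of_le_of_lt (Polynomial.degree_C_mul_X_pow_le _ _)
      (by exact_mod_cast i.isLt)
  have hndeg : f.natDegree < n :=
    (Polynomial.natDegree_lt_iff_degree_lt hfne).mpr hdeg
  -- Frobenius: all γ^(q^t) are roots
  have hfrob : ∀ (x : K) (t : ℕ),
      (∑ i : Fin n, a i * x ^ (i : ℕ)) ^ q ^ t = ∑ i : Fin n, a i * (x ^ q ^ t) ^ (i : ℕ) := by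
    intro x t
    induction t with
    | zero => simp
    | succ t ih =>
      have : (∑ i : Fin n, a i * x ^ (i : ℕ)) ^ q ^ (t + 1)
          = ((∑ i : Fin n, a i * x ^ (i : ℕ)) ^ q ^ t) ^ q := by
        rw [← pow_mul, pow_succ]
      rw [this, ih]
      have := map_sum (frobenius K q) (fun i : Fin n => a i * (x ^ q ^ t) ^ (i : ℕ)) Finset.univ
      simp only [frobenius_def] at this
      rw [this]
      refine Finset.sum_congr rfl fun i _ => ?_
      rw [mul_pow, hfix, ← pow_mul, ← pow_mul, ← pow_mul, mul_comm ((i:ℕ)) q, ← mul_assoc,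
        ← pow_succ]
  have hroot : ∀ t : ℕ, f.eval (γ ^ q ^ t) = 0 := by
    intro t
    rw [heval, ← hfrob, hsum0, zero_pow (pow_ne_zero t hq.pos.ne')]
  -- the roots γ^(q^t), t < m, are pairwise distinct
  have hγne : γ ≠ 0 := hγdef ▸ pow_ne_zero j hβne
  have hγu : IsUnit γ := hγ.isUnit hL.ne'
  have hord_u : orderOf hγu.unit = L := by
    rw [← orderOf_units, IsUnit.unit_spec, hγord]
  have hinj : Set.InjOn (fun t => γ ^ q ^ t) (Finset.range m) := by
    intro s hs t ht hst
    simp only [Finset.coe_range, Set.mem_Iio] at hs ht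
    have hu : hγu.unit ^ q ^ s = hγu.unit ^ q ^ t := by
      apply Units.ext
      simpa using hst
    have hmod : q ^ s ≡ q ^ t [MOD L] := by
      rw [← hord_u]; exact pow_eq_pow_iff_modEq.mp hu
    have hz : (q : ZMod L) ^ s = (q : ZMod L) ^ t := by
      have := (ZMod.natCast_eq_natCast_iff _ _ _).mpr hmod
      push_cast at this
      exact this
    have hQu : (ZMod.unitOfCoprime q hco : ZMod L) = (q : ZMod L) := rfl
    have hu2 : (ZMod.unitOfCoprime q hco) ^ s = (ZMod.unitOfCoprime q hco) ^ t := by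
      apply Units.ext
      push_cast [hQu]
      exact hz
    have : s ≡ t [MOD m] := by
      rw [← hm, ← hQu, orderOf_units]
      exact pow_eq_pow_iff_modEq.mp hu2
    have := this.eq_of_lt_of_lt hs ht
    exact this
  -- count roots
  have hsub : (Finset.range m).image (fun t => γ ^ q ^ t) ⊆ f.roots.toFinset := by
    intro x hx
    obtain ⟨t, _, rfl⟩ := Finset.mem_image.mp hx
    rw [Multiset.mem_toFinset, Polynomial.mem_roots hfne]
    exact hroot t
  have hcount : m ≤ f.natDegree := by
    calc m = ((Finset.range m).image (fun t => γ ^ q ^ t)).card := by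
            rw [Finset.card_image_of_injOn hinj, Finset.card_range]
      _ ≤ f.roots.toFinset.card := Finset.card_le_card hsub
      _ ≤ Multiset.card f.roots := f.roots.toFinset_card_le
      _ ≤ f.natDegree := Polynomial.card_roots' f
  omega
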